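/- Let $K$ be a $d$-simplex, $b_K$ its bubble function, and $p \in \mathbb{N}_0$. Then $\inf_{0 \neq \phi \in P_p(K)} \sup_{0 \neq \eta \in P_{p+d+1}(K) \cap H^1_0(K)} \frac{\Re\langle \phi, \eta\rangle_{L_2(K)}}{\|\phi\|_{L_2(K)} \|\eta\|_{L_2(K)}} \geq c > 0$, with $c$ depending only on $p$ and $d$ but not on $K$. -/

import Mathlib

open MeasureTheory MvPolynomial Finset

set_option maxHeartbeats 1000000

noncomputable section

namespace SimplexInfSup

variable {d : ℕ}

abbrev Euc (d : ℕ) : Type := EuclideanSpace ℝ (Fin d)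

/-- evaluation of a complex mv polynomial at a real point -/
def pev (ψ : MvPolynomial (Fin d) ℂ) (y : Euc d) : ℂ :=
  eval (fun i => ((y i : ℝ) : ℂ)) ψ

lemma pev_continuous (ψ : MvPolynomial (Fin d) ℂ) : Continuous (pev ψ) := by
  unfold pev
  simp only [eval_eq]
  refine continuous_finset_sum _ fun m _ => Continuous.mul continuous_const ?_
  refine continuous_finset_prod _ fun i _ => Continuous.pow ?_ _
  exact Complex.continuous_ofReal.comp (EuclideanSpace.proj (𝕜 := ℝ) i).continuous

lemma pev_add (ψ χ : MvPolynomial (Fin d) ℂ) : pev (ψ + χ) = pev ψ + pev χ := by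
  funext y; simp [pev]

lemma pev_smul (c : ℂ) (ψ : MvPolynomial (Fin d) ℂ) : pev (c • ψ) = c • pev ψ := by
  funext y; simp [pev, smul_eq_C_mul]

/-- the barycentric weights of the reference simplex -/
def wt (y : Euc d) : Fin (d + 1) → ℝ := Fin.cons (1 - ∑ k, y k) (fun k => y k)

lemma wt_sum (y : Euc d) : ∑ j, wt y j = 1 := by
  rw [wt, Fin.sum_cons]; ring

/-- the bubble weight of the reference simplex -/
def W (y : Euc d) : ℝ := ∏ j, wt y j

lemma continuous_W : Continuous (W (d := d)) := by
  refine continuous_finset_prod _ fun j _ => ?_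
  refine Fin.cases ?_ ?_ j
  · exact continuous_const.sub (continuous_finset_sum _ fun k _ =>
      (EuclideanSpace.proj (𝕜 := ℝ) k).continuous)
  · intro k; exact (EuclideanSpace.proj (𝕜 := ℝ) k).continuous

/-- vertices of the reference simplex -/
def pts (d : ℕ) : Fin (d + 1) → Euc d := Fin.cons 0 (fun k => EuclideanSpace.single k 1)

/-- the reference simplex -/
def Δ (d : ℕ) : Set (Euc d) := convexHull ℝ (Set.range (pts d))

lemma isCompact_Δ : IsCompact (Δ d) := (Set.finite_range (pts d)).isCompact_convexHull ℝ

lemma measurableSet_Δ : MeasurableSet (Δ d) :=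
  isCompact_Δ.isClosed.measurableSet

lemma mem_Δ {y : Euc d} (hy : y ∈ Δ d) : (∀ k, 0 ≤ y k) ∧ ∑ k, y k ≤ 1 := by
  have hconv : Convex ℝ {y : Euc d | (∀ k, 0 ≤ y k) ∧ ∑ k, y k ≤ 1} := by
    rintro a ⟨ha1, ha2⟩ c ⟨hc1, hc2⟩ s t hs ht hst
    have happ : ∀ k, (s • a + t • c) k = s * a k + t * c k := fun k => rfl
    constructor
    · intro k; rw [happ k]; have := ha1 k; have := hc1 k; positivity
    · simp only [happ]
      rw [Finset.sum_add_distrib, ← Finset.mul_sum, ← Finset.mul_sum]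
      nlinarith [Finset.sum_nonneg (fun k (_ : k ∈ Finset.univ) => ha1 k),
        Finset.sum_nonneg (fun k (_ : k ∈ Finset.univ) => hc1 k)]
  refine convexHull_min ?_ hconv hy
  rintro _ ⟨j, rfl⟩
  refine Fin.cases ?_ ?_ j
  · constructor
    · intro k; simp [pts]
    · simp [pts]
  · intro k
    constructor
    · intro k'; rw [pts, Fin.cons_succ, EuclideanSpace.single_apply]; positivity
    · rw [pts, Fin.cons_succ]
      simp [EuclideanSpace.single_apply]

lemma wt_nonneg {y : Euc d} (hy : y ∈ Δ d) (j : Fin (d + 1)) : 0 ≤ wt y j := by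
  obtain ⟨h1, h2⟩ := mem_Δ hy
  refine Fin.cases ?_ ?_ j
  · rw [wt, Fin.cons_zero]; linarith
  · intro k; rw [wt, Fin.cons_succ]; exact h1 k

lemma wt_le_one {y : Euc d} (hy : y ∈ Δ d) (j : Fin (d + 1)) : wt y j ≤ 1 := by
  obtain ⟨h1, h2⟩ := mem_Δ hy
  refine Fin.cases ?_ ?_ j
  · rw [wt, Fin.cons_zero]
    have : (0:ℝ) ≤ ∑ k, y k := Finset.sum_nonneg fun k _ => h1 k
    linarith
  · intro k; rw [wt, Fin.cons_succ]
    calc y k ≤ ∑ k', y k' := Finset.single_le_sum (fun k' _ => h1 k') (Finset.mem_univ k)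
    _ ≤ 1 := h2

lemma W_nonneg {y : Euc d} (hy : y ∈ Δ d) : 0 ≤ W y :=
  Finset.prod_nonneg fun j _ => wt_nonneg hy j

lemma W_le_one {y : Euc d} (hy : y ∈ Δ d) : W y ≤ 1 :=
  Finset.prod_le_one (fun j _ => wt_nonneg hy j) (fun j _ => wt_le_one hy j)

lemma hyperplane_null (ℓ : Euc d →ₗ[ℝ] ℝ) (hℓ : ℓ ≠ 0) (c : ℝ) :
    volume {y : Euc d | ℓ y = c} = 0 := by
  obtain ⟨v, hv⟩ : ∃ v, ℓ v ≠ 0 := by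
    by_contra h; push_neg at h; exact hℓ (LinearMap.ext fun v => h v)
  obtain ⟨y₀, hy₀⟩ : ∃ y₀, ℓ y₀ = c :=
    ⟨(c / ℓ v) • v, by rw [ℓ.map_smul, smul_eq_mul, div_mul_cancel₀ _ hv]⟩
  have hset : {y : Euc d | ℓ y = c} = (fun y => -y₀ + y) ⁻¹' (LinearMap.ker ℓ : Set (Euc d)) := by
    ext y
    simp only [Set.mem_setOf_eq, Set.mem_preimage, SetLike.mem_coe, LinearMap.mem_ker, map_add,
      map_neg, hy₀]
    constructor
    · intro h; rw [h]; ring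
    · intro h; linarith
  rw [hset, measure_preimage_add]
  exact Measure.addHaar_submodule volume _ (by simpa [LinearMap.ker_eq_top] using hℓ)

lemma ae_W_ne_zero : ∀ᵐ y : Euc d, W y ≠ 0 := by
  rcases d with _ | d
  · refine Filter.Eventually.of_forall fun y => ?_
    simp [W, wt]
  · have hsub : {y : Euc (d+1) | W y = 0} ⊆
        ⋃ j : Fin (d + 2), {y : Euc (d+1) | wt y j = 0} := by
      intro y hy
      obtain ⟨j, _, hj⟩ := Finset.prod_eq_zero_iff.mp hy
      exact Set.mem_iUnion.mpr ⟨j, hj⟩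
    have : volume {y : Euc (d+1) | W y = 0} = 0 := by
      refine measure_mono_null hsub (measure_iUnion_null fun j => ?_)
      have hproj : ∀ (k : Fin (d+1)) (y : Euc (d+1)), EuclideanSpace.projₗ (𝕜 := ℝ) k y = y k :=
        fun _ _ => rfl
      refine Fin.cases ?_ ?_ j
      · have hs : {y : Euc (d+1) | wt y 0 = 0} =
            {y : Euc (d+1) | (∑ k, EuclideanSpace.projₗ (𝕜 := ℝ) k) y = 1} := by
          ext y
          simp only [Set.mem_setOf_eq, wt, Fin.cons_zero, LinearMap.coe_sum,
            Finset.sum_apply, hproj]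
          constructor <;> intro h <;> linarith
        rw [hs]
        refine hyperplane_null _ ?_ 1
        intro h
        have h0 := LinearMap.congr_fun h (EuclideanSpace.single 0 1)
        simp only [LinearMap.coe_sum, Finset.sum_apply, hproj, LinearMap.zero_apply,
          EuclideanSpace.single_apply] at h0
        simp at h0
      · intro k
        have hs : {y : Euc (d+1) | wt y k.succ = 0} =
            {y : Euc (d+1) | (EuclideanSpace.projₗ (𝕜 := ℝ) k) y = 0} := by
          ext y; simp [wt, hproj]
        rw [hs]
        refine hyperplane_null _ ?_ 0
        intro h
        have h0 := LinearMap.congr_fun h (EuclideanSpace.single k 1)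
        simp only [hproj, LinearMap.zero_apply, EuclideanSpace.single_apply] at h0
        simp at h0
    filter_upwards [measure_eq_zero_iff_ae_notMem.mp this] with y hy
    simpa using hy


abbrev μΔ (d : ℕ) : Measure (Euc d) := volume.restrict (Δ d)

instance : IsFiniteMeasure (μΔ d) := ⟨by
  rw [Measure.restrict_apply_univ]
  exact isCompact_Δ.measure_lt_top⟩

lemma memL2 {f : Euc d → ℂ} (hf : Continuous f) : MemLp f 2 (μΔ d) := by
  obtain ⟨C, hC⟩ := isCompact_Δ.exists_bound_of_continuousOn hf.continuousOn
  exact MemLp.of_bound hf.aestronglyMeasurable C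
    (by filter_upwards [ae_restrict_mem measurableSet_Δ] with y hy using hC y hy)

lemma bounded_integrable {f : Euc d → ℝ} (hf : Continuous f) : Integrable f (μΔ d) := by
  obtain ⟨C, hC⟩ := isCompact_Δ.exists_bound_of_continuousOn hf.continuousOn
  rw [← memLp_one_iff_integrable]
  exact MemLp.of_bound hf.aestronglyMeasurable C
    (by filter_upwards [ae_restrict_mem measurableSet_Δ] with y hy using hC y hy)

lemma continuous_sqWC : Continuous (fun y : Euc d => ((Real.sqrt (W y) : ℝ) : ℂ)) :=
  Complex.continuous_ofReal.comp (Real.continuous_sqrt.comp continuous_W)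

variable (d p : ℕ)

def Imap : restrictTotalDegree (Fin d) ℂ p →ₗ[ℂ] Lp ℂ 2 (μΔ d) where
  toFun ψ := (memL2 (pev_continuous ψ.1)).toLp (pev ψ.1)
  map_add' ψ χ := by
    simp only [Submodule.coe_add, pev_add]
    exact MemLp.toLp_add _ _
  map_smul' c ψ := by
    simp only [Submodule.coe_smul, pev_smul, RingHom.id_apply]
    exact MemLp.toLp_const_smul _ _

def Jmap : restrictTotalDegree (Fin d) ℂ p →ₗ[ℂ] Lp ℂ 2 (μΔ d) where
  toFun ψ := (memL2 (continuous_sqWC.mul (pev_continuous ψ.1))).toLp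
      (fun y => ((Real.sqrt (W y) : ℝ) : ℂ) * pev ψ.1 y)
  map_add' ψ χ := by
    simp only [Submodule.coe_add, pev_add, Pi.add_apply, mul_add]
    exact MemLp.toLp_add _ _
  map_smul' c ψ := by
    have hfun : (fun y => ((Real.sqrt (W y) : ℝ) : ℂ) * pev ((c • ψ : _) : MvPolynomial (Fin d) ℂ) y)
        = c • (fun y => ((Real.sqrt (W y) : ℝ) : ℂ) * pev ψ.1 y) := by
      funext y
      simp only [Submodule.coe_smul, pev_smul, Pi.smul_apply, smul_eq_mul]
      ring
    simp only [RingHom.id_apply]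
    exact (MemLp.toLp_congr _ _ (Filter.EventuallyEq.of_eq hfun)).trans
      (MemLp.toLp_const_smul c _)

variable {d p}

lemma norm_toLp_sq {f : Euc d → ℂ} (hf : MemLp f 2 (μΔ d)) :
    ‖hf.toLp f‖ ^ 2 = ∫ y, ‖f y‖ ^ 2 ∂(μΔ d) := by
  rw [← @inner_self_eq_norm_sq ℂ _ _ _ _ (hf.toLp f), L2.inner_def,
    ← integral_re (L2.integrable_inner _ _)]
  refine integral_congr_ae ?_
  filter_upwards [hf.coeFn_toLp] with y hy
  rw [hy]
  exact @inner_self_eq_norm_sq ℂ _ _ _ _ (f y)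

lemma core_bound (d p : ℕ) : ∃ C : ℝ, 0 ≤ C ∧ ∀ ψ : MvPolynomial (Fin d) ℂ,
    ψ.totalDegree ≤ p →
    (∫ y, ‖pev ψ y‖ ^ 2 ∂(μΔ d)) ≤ C * ∫ y, W y * ‖pev ψ y‖ ^ 2 ∂(μΔ d) := by
  set I := Imap d p with hIdef
  set J := Jmap d p with hJdef
  have hker : LinearMap.ker J ≤ LinearMap.ker I := by
    intro ψ hψ
    rw [LinearMap.mem_ker] at hψ ⊢
    have hJψ : J ψ = (memL2 (continuous_sqWC.mul (pev_continuous ψ.1))).toLp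
        (fun y => ((Real.sqrt (W y) : ℝ) : ℂ) * pev ψ.1 y) := rfl
    have h0 : (fun y => ((Real.sqrt (W y) : ℝ) : ℂ) * pev ψ.1 y) =ᵐ[μΔ d] 0 :=
      (MemLp.coeFn_toLp (f := fun y => ((Real.sqrt (W y) : ℝ) : ℂ) * pev ψ.1 y) (memL2 (continuous_sqWC.mul (pev_continuous ψ.1)))).symm.trans
        (by rw [← hJψ, hψ]; exact Lp.coeFn_zero _ _ _)
    have h1 : pev ψ.1 =ᵐ[μΔ d] 0 := by
      have hW := ae_restrict_of_ae (μ := volume) (s := Δ d) (ae_W_ne_zero (d := d))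
      filter_upwards [h0, hW, ae_restrict_mem measurableSet_Δ] with y hy hWy hmem
      simp only [Pi.zero_apply] at hy ⊢
      rcases mul_eq_zero.mp hy with h | h
      · exact absurd (le_antisymm (Real.sqrt_eq_zero'.mp (Complex.ofReal_eq_zero.mp h))
          (W_nonneg hmem)) hWy
      · exact h
    rw [show I ψ = (memL2 (pev_continuous ψ.1)).toLp (pev ψ.1) from rfl,
      ← MemLp.toLp_zero (MemLp.zero (p := 2) (μ := μΔ d))]
    exact MemLp.toLp_eq_toLp_iff _ _ |>.mpr h1
  set M := (Submodule.liftQ (LinearMap.ker J) I hker).comp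
      (J.quotKerEquivRange.symm.toLinearMap) with hMdef
  set Mc := LinearMap.toContinuousLinearMap M with hMcdef
  refine ⟨‖Mc‖ ^ 2, by positivity, fun ψ hdeg => ?_⟩
  set ψV : restrictTotalDegree (Fin d) ℂ p :=
    ⟨ψ, (mem_restrictTotalDegree _ _ ψ).mpr hdeg⟩ with hψV
  have hI : ‖I ψV‖ ^ 2 = ∫ y, ‖pev ψ y‖ ^ 2 ∂(μΔ d) := by
    rw [show I ψV = (memL2 (pev_continuous ψV.1)).toLp (pev ψV.1) from rfl, norm_toLp_sq]
  have hJnorm : ‖J ψV‖ ^ 2 = ∫ y, W y * ‖pev ψ y‖ ^ 2 ∂(μΔ d) := by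
    rw [show J ψV = (memL2 (continuous_sqWC.mul (pev_continuous ψV.1))).toLp
        (fun y => ((Real.sqrt (W y) : ℝ) : ℂ) * pev ψV.1 y) from rfl, norm_toLp_sq]
    refine integral_congr_ae ?_
    filter_upwards [ae_restrict_mem measurableSet_Δ] with y hy
    rw [norm_mul, mul_pow, Complex.norm_real, Real.norm_eq_abs,
      abs_of_nonneg (Real.sqrt_nonneg _), Real.sq_sqrt (W_nonneg hy)]
  have hMc : I ψV = Mc ⟨J ψV, LinearMap.mem_range_self _ _⟩ := by
    rw [hMcdef, LinearMap.coe_toContinuousLinearMap', hMdef, LinearMap.comp_apply,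
      LinearEquiv.coe_toLinearMap, LinearMap.quotKerEquivRange_symm_apply_image,
      Submodule.mkQ_apply, Submodule.liftQ_apply]
  have hle : ‖I ψV‖ ≤ ‖Mc‖ * ‖J ψV‖ := by
    rw [hMc]
    calc ‖Mc ⟨J ψV, LinearMap.mem_range_self _ _⟩‖
        ≤ ‖Mc‖ * ‖(⟨J ψV, LinearMap.mem_range_self _ _⟩ : LinearMap.range J)‖ :=
          Mc.le_opNorm _
      _ = ‖Mc‖ * ‖J ψV‖ := rfl
  rw [← hI, ← hJnorm]
  nlinarith [hle, norm_nonneg (I ψV), norm_nonneg (J ψV), norm_nonneg Mc,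
    mul_le_mul hle hle (norm_nonneg (I ψV)) (by positivity : (0:ℝ) ≤ ‖Mc‖ * ‖J ψV‖)]

lemma core (d p : ℕ) : ∃ c : ℝ, 0 < c ∧ ∀ ψ : MvPolynomial (Fin d) ℂ,
    ψ.totalDegree ≤ p →
    c * Real.sqrt (∫ y, ‖pev ψ y‖ ^ 2 ∂(μΔ d))
      * Real.sqrt (∫ y, (W y) ^ 2 * ‖pev ψ y‖ ^ 2 ∂(μΔ d))
    ≤ ∫ y, W y * ‖pev ψ y‖ ^ 2 ∂(μΔ d) := by
  obtain ⟨C, hC0, hC⟩ := core_bound d p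
  have hC1 : (0:ℝ) < C + 1 := by linarith
  have hs1 : Real.sqrt (C + 1) ≠ 0 := by positivity
  refine ⟨(Real.sqrt (C + 1))⁻¹, by positivity, fun ψ hdeg => ?_⟩
  set X := ∫ y, ‖pev ψ y‖ ^ 2 ∂(μΔ d) with hX
  set Y := ∫ y, (W y) ^ 2 * ‖pev ψ y‖ ^ 2 ∂(μΔ d) with hY
  set Z := ∫ y, W y * ‖pev ψ y‖ ^ 2 ∂(μΔ d) with hZ
  have hZ0 : 0 ≤ Z := by
    refine integral_nonneg_of_ae ?_
    filter_upwards [ae_restrict_mem measurableSet_Δ] with y hy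
    have := W_nonneg hy
    positivity
  have hXZ : X ≤ (C + 1) * Z := by
    have := hC ψ hdeg
    nlinarith
  have hYZ : Y ≤ Z := by
    refine integral_mono_ae
      (bounded_integrable ((continuous_W.pow 2).mul ((pev_continuous ψ).norm.pow 2)))
      (bounded_integrable (continuous_W.mul ((pev_continuous ψ).norm.pow 2))) ?_
    filter_upwards [ae_restrict_mem measurableSet_Δ] with y hy
    have h1 := W_nonneg hy
    have h2 := W_le_one hy
    have h3 : (0:ℝ) ≤ ‖pev ψ y‖ ^ 2 := by positivity
    nlinarith [mul_nonneg (mul_nonneg h1 (sub_nonneg.mpr h2)) h3]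
  calc (Real.sqrt (C + 1))⁻¹ * Real.sqrt X * Real.sqrt Y
      ≤ (Real.sqrt (C + 1))⁻¹ * Real.sqrt ((C + 1) * Z) * Real.sqrt Z := by
        gcongr
    _ = Z := by
        rw [Real.sqrt_mul hC1.le]
        calc (Real.sqrt (C + 1))⁻¹ * (Real.sqrt (C+1) * Real.sqrt Z) * Real.sqrt Z
            = ((Real.sqrt (C + 1))⁻¹ * Real.sqrt (C+1)) * (Real.sqrt Z * Real.sqrt Z) := by
              ring
          _ = Z := by rw [inv_mul_cancel₀ hs1, one_mul, Real.mul_self_sqrt hZ0]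

/-! ### Affine machinery -/

lemma euclid_decomp (x : Euc d) : ∑ k, x k • EuclideanSpace.single k (1:ℝ) = x := by
  have h := (EuclideanSpace.basisFun (Fin d) ℝ).sum_repr x
  simpa [EuclideanSpace.basisFun_apply, EuclideanSpace.basisFun_repr] using h

lemma affine_apply (a : Euc d →ᵃ[ℝ] ℝ) (x : Euc d) :
    a x = a 0 + ∑ k, x k * a.linear (EuclideanSpace.single k 1) := by
  have h1 : a x = a.linear x + a 0 := by
    conv_lhs => rw [show x = x +ᵥ (0 : Euc d) by simp]
    rw [a.map_vadd]
    rfl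
  have h2 : a.linear x = ∑ k, x k * a.linear (EuclideanSpace.single k 1) := by
    conv_lhs => rw [← euclid_decomp x]
    rw [map_sum]
    simp [smul_eq_mul]
  rw [h1, h2]; ring

/-- polynomial with given constant and linear coefficients -/
def linPoly (r : ℝ) (cf : Fin d → ℝ) : MvPolynomial (Fin d) ℂ :=
  C ((r : ℝ) : ℂ) + ∑ k, C ((cf k : ℝ) : ℂ) * X k

lemma pev_linPoly (r : ℝ) (cf : Fin d → ℝ) (y : Euc d) :
    pev (linPoly r cf) y = ((r + ∑ k, y k * cf k : ℝ) : ℂ) := by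
  simp only [linPoly, pev, map_add, eval_C, map_sum, eval_mul, eval_X]
  push_cast
  congr 1
  exact Finset.sum_congr rfl fun k _ => mul_comm _ _

lemma linPoly_deg (r : ℝ) (cf : Fin d → ℝ) : (linPoly r cf).totalDegree ≤ 1 := by
  refine le_trans (totalDegree_add _ _) (max_le (by simp [totalDegree_C]) ?_)
  refine le_trans (totalDegree_finset_sum _ _) (Finset.sup_le fun k _ => ?_)
  refine le_trans (totalDegree_mul _ _) ?_
  simp [totalDegree_C, totalDegree_X]

lemma totalDegree_bind₁_le (g : Fin d → MvPolynomial (Fin d) ℂ)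
    (hg : ∀ i, (g i).totalDegree ≤ 1) (φ : MvPolynomial (Fin d) ℂ) :
    (bind₁ g φ).totalDegree ≤ φ.totalDegree := by
  conv_lhs => rw [φ.as_sum]
  rw [map_sum]
  refine (totalDegree_finset_sum _ _).trans (Finset.sup_le fun m hm => ?_)
  rw [bind₁_monomial]
  refine (totalDegree_mul _ _).trans ?_
  rw [totalDegree_C, zero_add]
  refine le_trans (totalDegree_finset_prod _ _) ?_
  refine le_trans (Finset.sum_le_sum (fun i (_ : i ∈ m.support) =>
    (totalDegree_pow _ _).trans ?_)) (le_totalDegree hm)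
  calc m i * (g i).totalDegree ≤ m i * 1 := Nat.mul_le_mul_left _ (hg i)
    _ = m i := mul_one _

variable (b : AffineBasis (Fin (d + 1)) ℝ (Euc d))

/-- the edge vectors of the simplex -/
def vK (k : Fin d) : Euc d := b k.succ - b 0

/-- the linear part of the parametrization of the simplex -/
def Amap : Euc d →L[ℝ] Euc d :=
  ∑ k, (EuclideanSpace.proj (𝕜 := ℝ) k).smulRight (vK b k)

lemma Amap_apply (y : Euc d) : Amap b y = ∑ k, y k • vK b k := by
  simp [Amap, ContinuousLinearMap.sum_apply]

/-- the affine parametrization of the simplex by the reference simplex -/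
def Smap (y : Euc d) : Euc d := Amap b y + b 0

lemma Smap_eq_comb (y : Euc d) :
    Smap b y = Finset.univ.affineCombination ℝ ⇑b (wt y) := by
  rw [Finset.univ.affineCombination_eq_weightedVSubOfPoint_vadd_of_sum_eq_one (wt y) ⇑b
    (wt_sum y) (b 0), Finset.weightedVSubOfPoint_apply]
  rw [Fin.sum_univ_succ]
  simp only [wt, Fin.cons_zero, Fin.cons_succ, vsub_self, smul_zero, zero_add, vsub_eq_sub,
    vadd_eq_add]
  rw [Smap, Amap_apply]
  rfl

lemma coord_Smap (j : Fin (d + 1)) (y : Euc d) : b.coord j (Smap b y) = wt y j := by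
  rw [Smap_eq_comb, b.coord_apply_combination_of_mem (Finset.mem_univ j) (wt_sum y)]

lemma vK_li : LinearIndependent ℝ (vK b) := by
  have h := (affineIndependent_iff_linearIndependent_vsub ℝ ⇑b 0).mp b.ind
  have h2 := h.comp (fun k : Fin d => (⟨k.succ, Fin.succ_ne_zero k⟩ : {x : Fin (d+1) // x ≠ 0}))
    (fun k k' hkk => by
      simpa [Fin.succ_inj] using congrArg Subtype.val hkk)
  exact h2

lemma Smap_inj : Function.Injective (Smap b) := by
  intro y y' h
  have h2 : Amap b (y - y') = 0 := by
    have hA : Amap b y = Amap b y' := by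
      have := h
      simp only [Smap] at this
      exact add_right_cancel this
    rw [map_sub, hA, sub_self]
  have h3 : ∀ k, (y - y') k = 0 := by
    refine Fintype.linearIndependent_iff.mp (vK_li b) (fun k => (y - y') k) ?_
    rw [← Amap_apply, h2]
  have h4 : y - y' = 0 := by ext k; simpa using h3 k
  exact sub_eq_zero.mp h4

lemma Smap_fderiv (y : Euc d) : HasFDerivAt (Smap b) (Amap b) y := by
  exact (Amap b).hasFDerivAt.add_const (b 0)

/-- `Smap` as an affine map -/
def Saff : Euc d →ᵃ[ℝ] Euc d :=
  AffineMap.mk' (Smap b) (Amap b).toLinearMap 0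
    (fun p' => by simp [Smap, vsub_eq_sub, vadd_eq_add, map_zero])

lemma image_Smap : Smap b '' (Δ d) = convexHull ℝ (Set.range ⇑b) := by
  have hcoe : ⇑(Saff b) = Smap b := AffineMap.coe_mk' _ _ _ _
  have hcomp : ⇑(Saff b) ∘ pts d = ⇑b := by
    funext j
    refine Fin.cases ?_ ?_ j
    · show Saff b (pts d 0) = b 0
      rw [hcoe]
      simp [pts, Smap, map_zero]
    · intro k
      show Saff b (pts d k.succ) = b k.succ
      rw [hcoe]
      simp only [pts, Fin.cons_succ, Smap, Amap_apply]
      have hone : ∑ j', (EuclideanSpace.single k (1:ℝ)) j' • vK b j' = vK b k := by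
        rw [Finset.sum_eq_single k]
        · simp [EuclideanSpace.single_apply]
        · intro j' _ hj'
          simp [EuclideanSpace.single_apply, hj']
        · intro h
          exact absurd (Finset.mem_univ k) h
      rw [hone, vK, sub_add_cancel]
  rw [← hcoe, Δ, AffineMap.image_convexHull, ← Set.range_comp, hcomp]

lemma cov {F : Type} [NormedAddCommGroup F] [NormedSpace ℝ F] (g : Euc d → F) :
    ∫ x in convexHull ℝ (Set.range ⇑b), g x
      = |(Amap b).det| • ∫ y in Δ d, g (Smap b y) := by
  rw [← image_Smap, integral_image_eq_integral_abs_det_fderiv_smul volume measurableSet_Δ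
    (fun y _ => (Smap_fderiv b y).hasFDerivWithinAt) ((Smap_inj b).injOn) g, integral_smul]

/-! ### The bubble polynomial -/

/-- polynomial representing an affine functional -/
def aPoly (a : Euc d →ᵃ[ℝ] ℝ) : MvPolynomial (Fin d) ℂ :=
  linPoly (a 0) (fun k => a.linear (EuclideanSpace.single k 1))

lemma pev_aPoly (a : Euc d →ᵃ[ℝ] ℝ) (x : Euc d) : pev (aPoly a) x = ((a x : ℝ) : ℂ) := by
  rw [aPoly, pev_linPoly, ← affine_apply]

/-- the bubble polynomial of the simplex -/
def bPoly : MvPolynomial (Fin d) ℂ := ∏ j : Fin (d + 1), aPoly (b.coord j)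

lemma pev_bPoly (x : Euc d) :
    pev (bPoly b) x = ((∏ j : Fin (d+1), b.coord j x : ℝ) : ℂ) := by
  calc pev (bPoly b) x = ∏ j : Fin (d+1), pev (aPoly (b.coord j)) x := by
        simp [pev, bPoly]
    _ = ∏ j : Fin (d+1), ((b.coord j x : ℝ) : ℂ) :=
        Finset.prod_congr rfl fun j _ => pev_aPoly _ _
    _ = _ := by push_cast; ring

lemma bPoly_deg : (bPoly b).totalDegree ≤ d + 1 := by
  refine le_trans (totalDegree_finset_prod _ _) ?_
  refine le_trans (Finset.sum_le_sum (fun j (_ : j ∈ Finset.univ) => linPoly_deg _ _)) ?_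
  simp

lemma bPoly_ne_zero : bPoly b ≠ 0 := by
  intro h
  have h2 := pev_bPoly b (Finset.univ.centroid ℝ ⇑b)
  rw [h] at h2
  simp only [pev, map_zero] at h2
  have h3 : (∏ j : Fin (d+1), b.coord j (Finset.univ.centroid ℝ ⇑b)) = 0 := by
    exact_mod_cast h2.symm
  obtain ⟨j, _, hj⟩ := Finset.prod_eq_zero_iff.mp h3
  rw [b.coord_apply_centroid (Finset.mem_univ j)] at hj
  simp only [inv_eq_zero, Finset.card_univ, Fintype.card_fin, Nat.cast_eq_zero] at hj
  exact absurd hj (by omega)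

lemma coord_nonneg_of_mem {x : Euc d} (hx : x ∈ convexHull ℝ (Set.range ⇑b)) (j : Fin (d+1)) :
    0 ≤ b.coord j x := by
  have hsub : convexHull ℝ (Set.range ⇑b) ⊆ {z | ∀ j, 0 ≤ b.coord j z} := by
    refine convexHull_min ?_ ?_
    · rintro _ ⟨i, rfl⟩ j'
      rw [b.coord_apply]
      split <;> norm_num
    · have hEq : {z : Euc d | ∀ j', 0 ≤ b.coord j' z}
          = ⋂ j', (b.coord j') ⁻¹' (Set.Ici 0) := by
        ext z; simp [Set.mem_iInter]
      rw [hEq]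
      exact convex_iInter fun j' => (convex_Ici 0).affine_preimage _
  exact hsub hx j

lemma frontier_coord {x : Euc d} (hx : x ∈ frontier (convexHull ℝ (Set.range ⇑b))) :
    ∃ j, b.coord j x = 0 := by
  have hK : IsClosed (convexHull ℝ (Set.range ⇑b)) :=
    ((Set.finite_range ⇑b).isCompact_convexHull ℝ).isClosed
  have hxK : x ∈ convexHull ℝ (Set.range ⇑b) :=
    hK.closure_subset (frontier_subset_closure hx)
  have hnint : x ∉ interior (convexHull ℝ (Set.range ⇑b)) := by
    rw [frontier] at hx
    exact hx.2
  by_contra hno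
  push_neg at hno
  refine hnint ?_
  rw [b.interior_convexHull]
  exact fun j => lt_of_le_of_ne (coord_nonneg_of_mem b hxK j) (Ne.symm (hno j))

/-! ### Substitution -/

/-- polynomials representing the coordinates of `Smap` -/
def SPoly (i : Fin d) : MvPolynomial (Fin d) ℂ :=
  linPoly (b 0 i) (fun k => vK b k i)

lemma pev_SPoly (i : Fin d) (y : Euc d) : pev (SPoly b i) y = ((Smap b y i : ℝ) : ℂ) := by
  have hsum : (Amap b y) i = ∑ k, y k * vK b k i := by
    rw [Amap_apply]
    have h : (∑ k, y k • vK b k : Euc d) i = ∑ k, (y k • vK b k : Euc d) i :=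
      map_sum (EuclideanSpace.proj (𝕜 := ℝ) i) (fun k => y k • vK b k) Finset.univ
    simp only [PiLp.smul_apply, smul_eq_mul] at h
    exact h
  have hS : Smap b y i = b 0 i + ∑ k, y k * vK b k i := by
    rw [Smap, PiLp.add_apply, hsum]
    ring
  rw [SPoly, pev_linPoly, hS]

lemma SPoly_deg (i : Fin d) : (SPoly b i).totalDegree ≤ 1 := linPoly_deg _ _

lemma pev_bind (φ : MvPolynomial (Fin d) ℂ) (y : Euc d) :
    pev (bind₁ (SPoly b) φ) y = pev φ (Smap b y) := by
  unfold pev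
  rw [show @eval ℂ (Fin d) _ (fun i => ((y i : ℝ) : ℂ))
      = ⇑(eval₂Hom (RingHom.id ℂ) (fun i => ((y i : ℝ) : ℂ))) from rfl, eval₂Hom_bind₁]
  have harg : (fun i => eval₂Hom (RingHom.id ℂ) (fun i' => ((y i' : ℝ) : ℂ)) (SPoly b i))
      = (fun i => ((Smap b y i : ℝ) : ℂ)) := _root_.funext fun i => pev_SPoly b i y
  rw [harg]
  rfl

end SimplexInfSup

open SimplexInfSup in
/-- the local inf-sup estimate (8.1) of the paper. For a nondegenerate
`d`-simplex `K ⊂ ℝ^d` (given by an affine basis `b`, `K = conv(range b)`) there is a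
constant `c = c_{p,d} > 0` independent of `K` such that for every `0 ≠ φ ∈ P_p(K)` there
is `0 ≠ η ∈ P_{p+d+1}(K) ∩ H¹₀(K)` (a polynomial of degree `≤ p+d+1` vanishing on `∂K`)
with `Re⟨φ,η⟩_{L₂(K)} ≥ c ‖φ‖_{L₂(K)} ‖η‖_{L₂(K)}`; i.e. the inf over `φ` of the sup
over `η` of the normalized pairing is `≥ c`. -/
theorem simplex_infsup_bubble (d p : ℕ) :
    ∃ c : ℝ, 0 < c ∧
      ∀ b : AffineBasis (Fin (d + 1)) ℝ (EuclideanSpace ℝ (Fin d)),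
        ∀ φ : MvPolynomial (Fin d) ℂ, φ.totalDegree ≤ p → φ ≠ 0 →
          ∃ η : MvPolynomial (Fin d) ℂ,
            η.totalDegree ≤ p + d + 1 ∧ η ≠ 0 ∧
            (∀ x ∈ frontier (convexHull ℝ (Set.range ⇑b)),
              MvPolynomial.eval (fun i => ((x i : ℝ) : ℂ)) η = 0) ∧
            c * Real.sqrt (∫ x in convexHull ℝ (Set.range ⇑b),
                  ‖MvPolynomial.eval (fun i => ((x i : ℝ) : ℂ)) φ‖ ^ 2)
              * Real.sqrt (∫ x in convexHull ℝ (Set.range ⇑b),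
                  ‖MvPolynomial.eval (fun i => ((x i : ℝ) : ℂ)) η‖ ^ 2)
            ≤ (∫ x in convexHull ℝ (Set.range ⇑b),
                MvPolynomial.eval (fun i => ((x i : ℝ) : ℂ)) φ *
                  (starRingEnd ℂ) (MvPolynomial.eval (fun i => ((x i : ℝ) : ℂ)) η)).re := by
  classical
  obtain ⟨c, hc, hcore⟩ := core d p
  refine ⟨c, hc, fun b φ hφdeg hφne => ?_⟩
  set η := bPoly b * φ with hηdef
  have hηdeg : η.totalDegree ≤ p + d + 1 := by
    have h0 := totalDegree_mul (bPoly b) φ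
    have h1 := bPoly_deg b
    rw [← hηdef] at h0
    omega
  have hηne : η ≠ 0 := mul_ne_zero (bPoly_ne_zero b) hφne
  refine ⟨η, hηdeg, hηne, ?_, ?_⟩
  · intro x hx
    obtain ⟨j, hj⟩ := frontier_coord b hx
    show pev η x = 0
    have hmul : pev η x = pev (bPoly b) x * pev φ x := by simp [hηdef, pev]
    rw [hmul, pev_bPoly, Finset.prod_eq_zero (Finset.mem_univ j) hj]
    simp
  · set ψ := bind₁ (SPoly b) φ with hψdef
    have hψdeg : ψ.totalDegree ≤ p :=
      le_trans (totalDegree_bind₁_le _ (SPoly_deg b) φ) hφdeg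
    set D := |(Amap b).det| with hDdef
    have hD0 : (0:ℝ) ≤ D := abs_nonneg _
    have hηS : ∀ y : Euc d, pev η (Smap b y) = ((W y : ℝ) : ℂ) * pev ψ y := by
      intro y
      have hmul : pev η (Smap b y) = pev (bPoly b) (Smap b y) * pev φ (Smap b y) := by
        simp [hηdef, pev]
      have hW : (∏ j : Fin (d+1), b.coord j (Smap b y)) = W y := by
        rw [W]
        exact Finset.prod_congr rfl fun j _ => coord_Smap b j y
      rw [hmul, pev_bPoly, hW, hψdef, pev_bind]
    have h1 : (∫ x in convexHull ℝ (Set.range ⇑b), ‖pev φ x‖ ^ 2)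
        = D * ∫ y in Δ d, ‖pev ψ y‖ ^ 2 := by
      rw [cov b (fun x => ‖pev φ x‖ ^ 2), smul_eq_mul]
      congr 1
      refine integral_congr_ae (Filter.Eventually.of_forall fun y => ?_)
      simp only [hψdef, pev_bind]
    have h2 : (∫ x in convexHull ℝ (Set.range ⇑b), ‖pev η x‖ ^ 2)
        = D * ∫ y in Δ d, (W y) ^ 2 * ‖pev ψ y‖ ^ 2 := by
      rw [cov b (fun x => ‖pev η x‖ ^ 2), smul_eq_mul]
      congr 1
      refine integral_congr_ae (Filter.Eventually.of_forall fun y => ?_)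
      simp only [hηS, norm_mul, Complex.norm_real, mul_pow, Real.norm_eq_abs, sq_abs]
    have h3 : (∫ x in convexHull ℝ (Set.range ⇑b),
          pev φ x * (starRingEnd ℂ) (pev η x))
        = (((D * ∫ y in Δ d, W y * ‖pev ψ y‖ ^ 2 : ℝ)) : ℂ) := by
      rw [cov b (fun x => pev φ x * (starRingEnd ℂ) (pev η x))]
      have hpt : ∀ y : Euc d, pev φ (Smap b y) * (starRingEnd ℂ) (pev η (Smap b y))
          = (((W y * ‖pev ψ y‖ ^ 2 : ℝ)) : ℂ) := by
        intro y
        rw [hηS y, map_mul, Complex.conj_ofReal, ← pev_bind b φ y, ← hψdef]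
        calc pev ψ y * ((W y : ℂ) * (starRingEnd ℂ) (pev ψ y))
            = (W y : ℂ) * (pev ψ y * (starRingEnd ℂ) (pev ψ y)) := by ring
          _ = (W y : ℂ) * ((Complex.normSq (pev ψ y) : ℝ) : ℂ) := by
              rw [Complex.mul_conj]
          _ = (((W y * ‖pev ψ y‖ ^ 2 : ℝ)) : ℂ) := by
              rw [← Complex.ofReal_mul]
              congr 1
              rw [Complex.normSq_eq_norm_sq]
      have hcast : (∫ y in Δ d, (((W y * ‖pev ψ y‖ ^ 2 : ℝ)) : ℂ))
          = (((∫ y in Δ d, W y * ‖pev ψ y‖ ^ 2 : ℝ)) : ℂ) := integral_ofReal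
      rw [integral_congr_ae (Filter.Eventually.of_forall hpt), Complex.real_smul, hcast,
        ← Complex.ofReal_mul]
    show c * Real.sqrt (∫ x in convexHull ℝ (Set.range ⇑b), ‖pev φ x‖ ^ 2)
        * Real.sqrt (∫ x in convexHull ℝ (Set.range ⇑b), ‖pev η x‖ ^ 2)
      ≤ (∫ x in convexHull ℝ (Set.range ⇑b),
          pev φ x * (starRingEnd ℂ) (pev η x)).re
    rw [h1, h2, h3, Complex.ofReal_re, Real.sqrt_mul hD0, Real.sqrt_mul hD0]
    calc c * (Real.sqrt D * Real.sqrt (∫ y in Δ d, ‖pev ψ y‖ ^ 2))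
          * (Real.sqrt D * Real.sqrt (∫ y in Δ d, (W y) ^ 2 * ‖pev ψ y‖ ^ 2))
        = (Real.sqrt D * Real.sqrt D) * (c * Real.sqrt (∫ y in Δ d, ‖pev ψ y‖ ^ 2)
            * Real.sqrt (∫ y in Δ d, (W y) ^ 2 * ‖pev ψ y‖ ^ 2)) := by ring
      _ = D * (c * Real.sqrt (∫ y in Δ d, ‖pev ψ y‖ ^ 2)
            * Real.sqrt (∫ y in Δ d, (W y) ^ 2 * ‖pev ψ y‖ ^ 2)) := by
          rw [Real.mul_self_sqrt hD0]
      _ ≤ D * ∫ y in Δ d, W y * ‖pev ψ y‖ ^ 2 :=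
          mul_le_mul_of_nonneg_left (hcore ψ hψdeg) hD0
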